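/- arXiv:1710.06384 — 4 statements merged into one kernel-verified Lean document; each statement's English description precedes it below -/
import Mathlib

section
/- Let P, W, W' ⊆ ℝ^d be polytopes, each of dimension d (i.e. each has affine span equal to ℝ^d). Suppose F is a facet of P, a facet of W, and a facet of W', and that P ∩ W = F and P ∩ W' = F. Then the intersection W ∩ W' has dimension d, i.e. the affine span of W ∩ W' is all of ℝ^d. -/
open Matrix

/-- A face of a polytope `P`: the intersection of `P` with a supporting hyperplane. -/
def IsFace {d : ℕ} (P F : Set (Fin d → ℝ)) : Prop :=
  ∃ (c : Fin d → ℝ) (c₀ : ℝ), (∀ x ∈ P, c ⬝ᵥ x ≤ c₀) ∧ F = {x ∈ P | c ⬝ᵥ x = c₀}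

open Classical in
/-- The dimension of a subset of `ℝ^d`: the dimension of its affine span
(with the convention that the empty set has dimension `-1`). -/
noncomputable def setDim {d : ℕ} (s : Set (Fin d → ℝ)) : ℤ :=
  if s = ∅ then -1 else (Module.finrank ℝ (affineSpan ℝ s).direction : ℤ)

/-- A facet of a polytope `P`: a face of dimension `dim P - 1`. -/
def IsFacet {d : ℕ} (P F : Set (Fin d → ℝ)) : Prop :=
  IsFace P F ∧ setDim F = setDim P - 1

/-- The linear functional `x ↦ c ⬝ᵥ x`. -/
noncomputable def dotL {d : ℕ} (c : Fin d → ℝ) : (Fin d → ℝ) →ₗ[ℝ] ℝ where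
  toFun x := c ⬝ᵥ x
  map_add' x y := by simp [dotProduct_add]
  map_smul' r x := by simp [dotProduct_smul, smul_eq_mul]

lemma dotProduct_self_pos' {d : ℕ} {c : Fin d → ℝ} (hc : c ≠ 0) : 0 < c ⬝ᵥ c := by
  have h0 : 0 ≤ c ⬝ᵥ c := Finset.sum_nonneg fun i _ => mul_self_nonneg _
  rcases h0.lt_or_eq with h | h
  · exact h
  · exact absurd ((dotProduct_self_eq_zero).1 h.symm) hc

/-- Near a point of the intrinsic interior of `F`, moving in a direction of the
affine span of `F` stays in `F`. -/
lemma aux_R {d : ℕ} (F : Set (Fin d → ℝ)) (x₀ : Fin d → ℝ)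
    (hx₀ : x₀ ∈ intrinsicInterior ℝ F) (u : Fin d → ℝ)
    (hu : u ∈ (affineSpan ℝ F).direction) :
    ∃ δ > (0:ℝ), ∀ ε : ℝ, |ε| ≤ δ → x₀ + ε • u ∈ F := by
  obtain ⟨y, hy, hyx⟩ := hx₀
  have hx₀span : x₀ ∈ affineSpan ℝ F := hyx ▸ y.2
  have hmem : ∀ ε : ℝ, x₀ + ε • u ∈ affineSpan ℝ F := by
    intro ε
    have := AffineSubspace.vadd_mem_of_mem_direction
      (Submodule.smul_mem _ ε hu) hx₀span
    simpa [vadd_eq_add, add_comm] using this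
  set g : ℝ → affineSpan ℝ F := fun ε => ⟨x₀ + ε • u, hmem ε⟩ with hg
  have hgc : Continuous g := by
    apply Continuous.subtype_mk
    exact continuous_const.add (continuous_id.smul continuous_const)
  have hopen : IsOpen (g ⁻¹' interior ((↑) ⁻¹' F : Set (affineSpan ℝ F))) :=
    isOpen_interior.preimage hgc
  have h0 : (0:ℝ) ∈ g ⁻¹' interior ((↑) ⁻¹' F : Set (affineSpan ℝ F)) := by
    have : g 0 = y := by
      apply Subtype.ext
      simp [hg, hyx]
    simpa [this] using hy
  obtain ⟨δ, hδ, hball⟩ := Metric.isOpen_iff.1 hopen 0 h0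
  refine ⟨δ/2, by positivity, fun ε hε => ?_⟩
  have : ε ∈ Metric.ball (0:ℝ) δ := by
    simp only [Metric.mem_ball, Real.dist_eq, sub_zero]
    calc |ε| ≤ δ/2 := hε
    _ < δ := by linarith
  have := hball this
  have := interior_subset this
  simpa [hg] using this

/-- Starting from a "relatively interior" point of the face of a convex set,
one can move into the supporting half-space direction and stay in the set. -/
lemma aux_L {d : ℕ} (Q : Set (Fin d → ℝ)) (hQ : Convex ℝ Q) (c : Fin d → ℝ) (c₀ : ℝ)
    (s₁ : Fin d → ℝ) (hs₁ : s₁ ∈ Q) (hs₁lt : c ⬝ᵥ s₁ < c₀)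
    (x₀ : Fin d → ℝ) (hx₀c : c ⬝ᵥ x₀ = c₀)
    (hrel : ∀ u, c ⬝ᵥ u = 0 → ∃ δ > (0:ℝ), ∀ ε : ℝ, |ε| ≤ δ → x₀ + ε • u ∈ Q)
    (v : Fin d → ℝ) (hv : c ⬝ᵥ v ≤ 0) :
    ∃ δ > (0:ℝ), ∀ ε : ℝ, 0 < ε → ε ≤ δ → x₀ + ε • v ∈ Q := by
  set w := s₁ - x₀ with hw
  have hcw : c ⬝ᵥ w < 0 := by
    rw [hw, dotProduct_sub, hx₀c]; linarith
  set α := (c ⬝ᵥ v) / (c ⬝ᵥ w) with hα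
  have hα0 : 0 ≤ α := div_nonneg_of_nonpos hv hcw.le
  set u := v - α • w with hu
  have hcu : c ⬝ᵥ u = 0 := by
    rw [hu, dotProduct_sub, dotProduct_smul, hα, smul_eq_mul,
      div_mul_cancel₀ _ hcw.ne, sub_self]
  obtain ⟨δ₁, hδ₁, h1⟩ := hrel u hcu
  refine ⟨min (δ₁/2) (1/(2*(α+1))), lt_min (by positivity) (by positivity), ?_⟩
  intro ε hε0 hεle
  have hεle1 : ε ≤ δ₁/2 := hεle.trans (min_le_left _ _)
  have hεle2 : ε ≤ 1/(2*(α+1)) := hεle.trans (min_le_right _ _)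
  set θ := ε * α with hθ
  have hθ0 : 0 ≤ θ := mul_nonneg hε0.le hα0
  have hθhalf : θ ≤ 1/2 := by
    rw [hθ]
    have h1' : ε * α ≤ (1/(2*(α+1))) * α :=
      mul_le_mul_of_nonneg_right hεle2 hα0
    have h2' : (1/(2*(α+1))) * α ≤ 1/2 := by
      rw [div_mul_eq_mul_div, one_mul, div_le_div_iff₀ (by positivity) (by norm_num)]
      nlinarith
    linarith
  have hne : (1:ℝ) - θ ≠ 0 := by linarith
  have hy : x₀ + (ε/(1-θ)) • u ∈ Q := by
    apply h1
    have hpos : 0 < ε/(1-θ) := by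
      apply div_pos hε0; linarith
    rw [abs_of_pos hpos]
    calc ε/(1-θ) ≤ ε/(1/2) := by
          apply div_le_div_of_nonneg_left hε0.le (by norm_num); linarith
      _ = 2*ε := by ring
      _ ≤ δ₁ := by linarith
  have key : x₀ + ε • v = (1-θ) • (x₀ + (ε/(1-θ)) • u) + θ • s₁ := by
    have h2 : (1-θ) • ((ε/(1-θ)) • u) = ε • u := by
      rw [smul_smul, mul_div_cancel₀ _ hne]
    rw [smul_add, h2, hu, hθ, hw]
    module
  rw [key]
  exact hQ hy hs₁ (by linarith) hθ0 (by ring)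

/-- Basic facts about a full-dimensional convex set having `F` as a face of
dimension `d - 1`. -/
lemma aux_P {d : ℕ} (hd : 1 ≤ d) (Q F : Set (Fin d → ℝ))
    (hdQ : affineSpan ℝ Q = ⊤)
    (hFne : F.Nonempty)
    (c : Fin d → ℝ) (c₀ : ℝ)
    (hsupp : ∀ x ∈ Q, c ⬝ᵥ x ≤ c₀)
    (hFeq : F = {x ∈ Q | c ⬝ᵥ x = c₀})
    (hdimF : Module.finrank ℝ (affineSpan ℝ F).direction = d - 1) :
    c ≠ 0 ∧ (affineSpan ℝ F).direction = LinearMap.ker (dotL c) ∧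
      ∃ s₁ ∈ Q, c ⬝ᵥ s₁ < c₀ := by
  have hFtop : ¬ (affineSpan ℝ F = ⊤) := by
    intro h
    rw [h, AffineSubspace.direction_top, finrank_top, Module.finrank_fin_fun] at hdimF
    omega
  have hFneQtop : F ≠ Q := by
    intro h; rw [h, hdQ] at hFtop; exact hFtop rfl
  have hc : c ≠ 0 := by
    intro h
    subst h
    obtain ⟨x, hx⟩ := hFne
    rw [hFeq] at hx
    have hc₀ : c₀ = 0 := by simpa using hx.2.symm
    apply hFneQtop
    rw [hFeq]
    ext y; simp [hc₀]
  have hcc : 0 < c ⬝ᵥ c := dotProduct_self_pos' hc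
  have hker : Module.finrank ℝ (LinearMap.ker (dotL c)) = d - 1 := by
    have hrange : LinearMap.range (dotL c) = ⊤ := by
      rw [LinearMap.range_eq_top]
      intro r
      refine ⟨(r / (c ⬝ᵥ c)) • c, ?_⟩
      show c ⬝ᵥ ((r / (c ⬝ᵥ c)) • c) = r
      rw [dotProduct_smul, smul_eq_mul, div_mul_cancel₀ _ hcc.ne']
    have h := LinearMap.finrank_range_add_finrank_ker (dotL c)
    rw [hrange, finrank_top, Module.finrank_self, Module.finrank_fin_fun] at h
    omega
  have hle : (affineSpan ℝ F).direction ≤ LinearMap.ker (dotL c) := by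
    rw [direction_affineSpan, vectorSpan_def]
    rw [Submodule.span_le]
    rintro z hz
    rw [Set.mem_vsub] at hz
    obtain ⟨x, hx, y, hy, rfl⟩ := hz
    rw [hFeq] at hx hy
    simp only [SetLike.mem_coe, LinearMap.mem_ker]
    show c ⬝ᵥ (x - y) = 0
    rw [dotProduct_sub, hx.2, hy.2, sub_self]
  refine ⟨hc, Submodule.eq_of_le_of_finrank_le hle (by rw [hker, hdimF]), ?_⟩
  by_contra h
  push_neg at h
  apply hFneQtop
  rw [hFeq]
  ext y
  constructor
  · rintro ⟨hy, _⟩; exact hy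
  · intro hy; exact ⟨hy, le_antisymm (hsupp y hy) (h y hy)⟩

theorem inter_fullDim_of_common_facet {d : ℕ}
    (SP SW SW' : Set (Fin d → ℝ)) (hSP : SP.Finite) (hSW : SW.Finite) (hSW' : SW'.Finite)
    (hdP : affineSpan ℝ (convexHull ℝ SP) = ⊤)
    (hdW : affineSpan ℝ (convexHull ℝ SW) = ⊤)
    (hdW' : affineSpan ℝ (convexHull ℝ SW') = ⊤)
    (F : Set (Fin d → ℝ))
    (hFP : IsFacet (convexHull ℝ SP) F)
    (hFW : IsFacet (convexHull ℝ SW) F)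
    (hFW' : IsFacet (convexHull ℝ SW') F)
    (hPW : convexHull ℝ SP ∩ convexHull ℝ SW = F)
    (hPW' : convexHull ℝ SP ∩ convexHull ℝ SW' = F) :
    affineSpan ℝ (convexHull ℝ SW ∩ convexHull ℝ SW') = ⊤ := by
  classical
  set P := convexHull ℝ SP with hPdef
  set W := convexHull ℝ SW with hWdef
  set W' := convexHull ℝ SW' with hW'def
  -- nonemptiness
  have hne : ∀ s : Set (Fin d → ℝ), affineSpan ℝ s = ⊤ → s.Nonempty := by
    intro s h
    by_contra hs
    rw [Set.not_nonempty_iff_eq_empty] at hs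
    rw [hs, AffineSubspace.span_empty] at h
    have h0 : (0 : Fin d → ℝ) ∈ (⊥ : AffineSubspace ℝ (Fin d → ℝ)) :=
      h ▸ AffineSubspace.mem_top ℝ _ 0
    rw [← AffineSubspace.mem_coe, AffineSubspace.bot_coe] at h0
    exact h0
  have hPne : P.Nonempty := hne _ hdP
  have hWne : W.Nonempty := hne _ hdW
  -- setDim of a full-dimensional set is d
  have hsd : ∀ s : Set (Fin d → ℝ), affineSpan ℝ s = ⊤ → setDim s = d := by
    intro s h
    unfold setDim
    rw [if_neg (Set.nonempty_iff_ne_empty.1 (hne _ h)), h,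
      AffineSubspace.direction_top, finrank_top, Module.finrank_fin_fun]
  have hdimFZ : setDim F = (d : ℤ) - 1 := by rw [hFP.2, hsd _ hdP]
  -- dispose of the case d = 0
  rcases Nat.eq_zero_or_pos d with hd0 | hd1
  · exfalso
    have hFempty : F = ∅ := by
      by_contra h
      unfold setDim at hdimFZ
      rw [if_neg h] at hdimFZ
      omega
    obtain ⟨p, hp⟩ := hPne
    obtain ⟨w, hw⟩ := hWne
    have hpw : p = w := funext fun i => Fin.elim0 (hd0 ▸ i)
    have hmem : w ∈ P ∩ W := ⟨hpw ▸ hp, hw⟩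
    rw [hPW, hFempty] at hmem
    exact hmem
  -- now d ≥ 1
  have hd1' : 1 ≤ d := hd1
  have hFne : F.Nonempty := by
    rw [Set.nonempty_iff_ne_empty]
    intro h
    unfold setDim at hdimFZ
    rw [if_pos h] at hdimFZ
    omega
  have hdimF : Module.finrank ℝ (affineSpan ℝ F).direction = d - 1 := by
    unfold setDim at hdimFZ
    rw [if_neg (Set.nonempty_iff_ne_empty.1 hFne)] at hdimFZ
    omega
  -- the three face functionals
  obtain ⟨cP, bP, hsuppP, hFeqP⟩ := hFP.1
  obtain ⟨cW, bW, hsuppW, hFeqW⟩ := hFW.1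
  obtain ⟨cW', bW', hsuppW', hFeqW'⟩ := hFW'.1
  obtain ⟨hcP, hkerP, sP, hsPQ, hsPlt⟩ := aux_P hd1' P F hdP hFne cP bP hsuppP hFeqP hdimF
  obtain ⟨hcW, hkerW, sW, hsWQ, hsWlt⟩ := aux_P hd1' W F hdW hFne cW bW hsuppW hFeqW hdimF
  obtain ⟨hcW', hkerW', sW', hsW'Q, hsW'lt⟩ :=
    aux_P hd1' W' F hdW' hFne cW' bW' hsuppW' hFeqW' hdimF
  have hcc : 0 < cP ⬝ᵥ cP := dotProduct_self_pos' hcP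
  -- a relative interior point of F
  have hFconv : Convex ℝ F := by
    rw [← hPW]; exact (convex_convexHull ℝ SP).inter (convex_convexHull ℝ SW)
  obtain ⟨x₀, hx₀i⟩ := Set.Nonempty.intrinsicInterior hFconv hFne
  have hx₀F : x₀ ∈ F := intrinsicInterior_subset hx₀i
  have hx₀P : x₀ ∈ P := (hFeqP ▸ hx₀F).1
  have hx₀cP : cP ⬝ᵥ x₀ = bP := (hFeqP ▸ hx₀F).2
  have hx₀cW : cW ⬝ᵥ x₀ = bW := (hFeqW ▸ hx₀F).2
  have hx₀cW' : cW' ⬝ᵥ x₀ = bW' := (hFeqW' ▸ hx₀F).2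
  have hFsubP : F ⊆ P := by rw [hFeqP]; exact fun x hx => hx.1
  have hFsubW : F ⊆ W := by rw [hFeqW]; exact fun x hx => hx.1
  have hFsubW' : F ⊆ W' := by rw [hFeqW']; exact fun x hx => hx.1
  -- the relative-interior moving property, phrased for each functional
  have hrelgen : ∀ (c : Fin d → ℝ), (affineSpan ℝ F).direction = LinearMap.ker (dotL c) →
      ∀ u, c ⬝ᵥ u = 0 → ∃ δ > (0:ℝ), ∀ ε : ℝ, |ε| ≤ δ → x₀ + ε • u ∈ F := by
    intro c hker u hcu
    have hmem : u ∈ LinearMap.ker (dotL c) := LinearMap.mem_ker.2 hcu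
    exact aux_R F x₀ hx₀i u (hker ▸ hmem)
  have hrelP : ∀ u, cP ⬝ᵥ u = 0 →
      ∃ δ > (0:ℝ), ∀ ε : ℝ, |ε| ≤ δ → x₀ + ε • u ∈ P := by
    intro u hu
    obtain ⟨δ, hδ, h⟩ := hrelgen cP hkerP u hu
    exact ⟨δ, hδ, fun ε hε => hFsubP (h ε hε)⟩
  have hrelW : ∀ u, cW ⬝ᵥ u = 0 →
      ∃ δ > (0:ℝ), ∀ ε : ℝ, |ε| ≤ δ → x₀ + ε • u ∈ W := by
    intro u hu
    obtain ⟨δ, hδ, h⟩ := hrelgen cW hkerW u hu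
    exact ⟨δ, hδ, fun ε hε => hFsubW (h ε hε)⟩
  have hrelW' : ∀ u, cW' ⬝ᵥ u = 0 →
      ∃ δ > (0:ℝ), ∀ ε : ℝ, |ε| ≤ δ → x₀ + ε • u ∈ W' := by
    intro u hu
    obtain ⟨δ, hδ, h⟩ := hrelgen cW' hkerW' u hu
    exact ⟨δ, hδ, fun ε hε => hFsubW' (h ε hε)⟩
  -- proportionality of functionals
  have hprop : ∀ (c : Fin d → ℝ), (affineSpan ℝ F).direction = LinearMap.ker (dotL c) →
      ∀ x, c ⬝ᵥ x = ((c ⬝ᵥ cP)/(cP ⬝ᵥ cP)) * (cP ⬝ᵥ x) := by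
    intro c hker x
    set β := (cP ⬝ᵥ x)/(cP ⬝ᵥ cP) with hβ
    have h1 : cP ⬝ᵥ (x - β • cP) = 0 := by
      rw [dotProduct_sub, dotProduct_smul, smul_eq_mul, hβ,
        div_mul_cancel₀ _ hcc.ne', sub_self]
    have h2 : x - β • cP ∈ LinearMap.ker (dotL cP) := LinearMap.mem_ker.2 h1
    rw [← hkerP, hker] at h2
    have h3 : c ⬝ᵥ (x - β • cP) = 0 := h2
    rw [dotProduct_sub, dotProduct_smul, smul_eq_mul, sub_eq_zero] at h3
    rw [h3, hβ]; ring
  -- the sign of λ for W and W'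
  have hsign : ∀ (c : Fin d → ℝ) (c₀ : ℝ) (S : Set (Fin d → ℝ)),
      W = convexHull ℝ S ∨ W' = convexHull ℝ S →
      (∀ x ∈ convexHull ℝ S, c ⬝ᵥ x ≤ c₀) →
      (affineSpan ℝ F).direction = LinearMap.ker (dotL c) →
      c ≠ 0 →
      (∃ s₁ ∈ convexHull ℝ S, c ⬝ᵥ s₁ < c₀) →
      c ⬝ᵥ x₀ = c₀ →
      (∀ u, c ⬝ᵥ u = 0 → ∃ δ > (0:ℝ), ∀ ε : ℝ, |ε| ≤ δ → x₀ + ε • u ∈ convexHull ℝ S) →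
      (convexHull ℝ SP ∩ convexHull ℝ S = F) →
      (c ⬝ᵥ cP)/(cP ⬝ᵥ cP) < 0 := by
    intro c c₀ S _ hsupp hker hc hs₁ hx₀c hrel hPS
    set lam := (c ⬝ᵥ cP)/(cP ⬝ᵥ cP) with hlamdef
    have hlam : ∀ x, c ⬝ᵥ x = lam * (cP ⬝ᵥ x) := hprop c hker
    have hlamne : lam ≠ 0 := by
      intro h
      have hcx := hlam c
      rw [h, zero_mul] at hcx
      exact hc (dotProduct_self_eq_zero.1 hcx)
    rcases lt_or_gt_of_ne hlamne with h | hpos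
    · exact h
    exfalso
    obtain ⟨s₁, hs₁Q, hs₁lt⟩ := hs₁
    obtain ⟨δ1, hδ1, hP1⟩ := aux_L P (convex_convexHull ℝ SP) cP bP sP hsPQ hsPlt x₀
      hx₀cP hrelP (-cP) (by rw [dotProduct_neg]; linarith)
    obtain ⟨δ2, hδ2, hS1⟩ := aux_L (convexHull ℝ S) (convex_convexHull ℝ S) c c₀ s₁
      hs₁Q hs₁lt x₀ hx₀c hrel (-cP) (by
        have h1 := hlam (-cP)
        simp only [dotProduct_neg] at h1 ⊢
        nlinarith [mul_pos hpos hcc])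
    set ε := min δ1 δ2 with hεdef
    have hε0 : 0 < ε := lt_min hδ1 hδ2
    have hxF : x₀ + ε • (-cP) ∈ F := by
      rw [← hPS]
      exact ⟨hP1 ε hε0 (min_le_left _ _), hS1 ε hε0 (min_le_right _ _)⟩
    have hxeq : cP ⬝ᵥ (x₀ + ε • (-cP)) = bP := (hFeqP ▸ hxF).2
    rw [dotProduct_add, dotProduct_smul, dotProduct_neg, hx₀cP, smul_eq_mul] at hxeq
    nlinarith
  have hlamW : (cW ⬝ᵥ cP)/(cP ⬝ᵥ cP) < 0 :=
    hsign cW bW SW (Or.inl rfl) hsuppW hkerW hcW ⟨sW, hsWQ, hsWlt⟩ hx₀cW hrelW hPW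
  have hlamW' : (cW' ⬝ᵥ cP)/(cP ⬝ᵥ cP) < 0 :=
    hsign cW' bW' SW' (Or.inr rfl) hsuppW' hkerW' hcW' ⟨sW', hsW'Q, hsW'lt⟩ hx₀cW' hrelW' hPW'
  -- the common point of W and W' off the hyperplane
  have hvW : cW ⬝ᵥ cP ≤ 0 := by
    have := hprop cW hkerW cP
    nlinarith
  have hvW' : cW' ⬝ᵥ cP ≤ 0 := by
    have := hprop cW' hkerW' cP
    nlinarith
  obtain ⟨δ3, hδ3, hW3⟩ := aux_L W (convex_convexHull ℝ SW) cW bW sW hsWQ hsWlt x₀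
    hx₀cW hrelW cP hvW
  obtain ⟨δ4, hδ4, hW4⟩ := aux_L W' (convex_convexHull ℝ SW') cW' bW' sW' hsW'Q hsW'lt x₀
    hx₀cW' hrelW' cP hvW'
  set ε := min δ3 δ4 with hεdef
  have hε0 : 0 < ε := lt_min hδ3 hδ4
  set x := x₀ + ε • cP with hxdef
  have hxWW : x ∈ W ∩ W' :=
    ⟨hW3 ε hε0 (min_le_left _ _), hW4 ε hε0 (min_le_right _ _)⟩
  -- conclude full-dimensionality
  set A := affineSpan ℝ (W ∩ W') with hAdef
  have hFsub : F ⊆ W ∩ W' := fun y hy => ⟨hFsubW hy, hFsubW' hy⟩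
  have hdirle : (affineSpan ℝ F).direction ≤ A.direction :=
    AffineSubspace.direction_le (affineSpan_mono ℝ hFsub)
  have hx₀A : x₀ ∈ A := subset_affineSpan ℝ _ (hFsub hx₀F)
  have hxA : x ∈ A := subset_affineSpan ℝ _ hxWW
  have hcPA : cP ∈ A.direction := by
    have h1 : x -ᵥ x₀ ∈ A.direction := AffineSubspace.vsub_mem_direction hxA hx₀A
    have h2 : x -ᵥ x₀ = ε • cP := by rw [hxdef]; simp [vsub_eq_sub]
    rw [h2] at h1
    have h3 := Submodule.smul_mem A.direction ε⁻¹ h1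
    rwa [smul_smul, inv_mul_cancel₀ hε0.ne', one_smul] at h3
  have hdir : A.direction = ⊤ := by
    rw [Submodule.eq_top_iff']
    intro y
    have h1 : y - ((cP ⬝ᵥ y)/(cP ⬝ᵥ cP)) • cP ∈ LinearMap.ker (dotL cP) := by
      apply LinearMap.mem_ker.2
      show cP ⬝ᵥ _ = 0
      rw [dotProduct_sub, dotProduct_smul, smul_eq_mul, div_mul_cancel₀ _ hcc.ne', sub_self]
    rw [← hkerP] at h1
    have h2 := hdirle h1
    have h3 := Submodule.smul_mem A.direction ((cP ⬝ᵥ y)/(cP ⬝ᵥ cP)) hcPA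
    have h4 := Submodule.add_mem A.direction h2 h3
    simpa using h4
  have hAne : (A : Set (Fin d → ℝ)).Nonempty := ⟨x₀, hx₀A⟩
  exact (AffineSubspace.direction_eq_top_iff_of_nonempty hAne).1 hdir
end

section
/- Let T be a neighbor-b-index-tree, v ∈ V and f ∈ F. If there is a depth-k f-neighbor w of v, then: w is the only f-neighbor of v (i.e. any depth-k' f-neighbor of v equals w), the depth k is unique (any k' for which v has a depth-k' f-neighbor equals k), ℓ(w) = ℓ(v), and k ≤ ℓ(v). -/
/-- A `b`-index-tree: `V` with root `r`, a bijective child function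
`C : V × B → V \ {r}`, the parent function `P`, the level function `ℓ`, and
the index function `I` (`P` and `I` are only meaningful away from the root;
their defining laws are stated for non-root nodes). -/
structure BIndexTree (b : ℕ) (V : Type) where
  root : V
  child : V → Fin b → V
  parent : V → V
  idx : V → Fin b
  lvl : V → ℕ
  child_ne_root : ∀ v j, child v j ≠ root
  child_inj : Function.Injective fun p : V × Fin b => child p.1 p.2
  child_surj : ∀ w, w ≠ root → ∃ v j, child v j = w
  parent_child : ∀ v j, parent (child v j) = v
  lvl_root : lvl root = 0
  lvl_eq : ∀ v, v ≠ root → lvl v = lvl (parent v) + 1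
  child_parent_idx : ∀ v, v ≠ root → child (parent v) (idx v) = v

/-- A neighbor-`b`-index-tree: a `b`-index-tree together with states,
facet labels, and the lookup functions `N`, `Ω`, `Fᵖ` (`⊥` is modeled by `none`). -/
structure NeighborTree (b : ℕ) (V S F : Type) extends BIndexTree b V where
  state : V → S
  N : Fin b → S → F → Option (Fin b)
  Om : Fin b → S → S → F → Option (Fin b)
  Fp : Fin b → S → F → Option F

/-- `IsDepthNbr T k f v w`: `w` is a depth-`k` `f`-neighbor of `v`. -/
def IsDepthNbr {b : ℕ} {V S F : Type} (T : NeighborTree b V S F) :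
    ℕ → F → V → V → Prop
  | 0, _, _, _ => False
  | 1, f, v, w =>
      v ≠ T.root ∧ w ≠ T.root ∧
      ∃ j : Fin b, T.N (T.idx v) (T.state (T.parent v)) f = some j ∧
        w = T.child (T.parent v) j
  | (k + 2), f, v, w =>
      v ≠ T.root ∧ w ≠ T.root ∧
      T.N (T.idx v) (T.state (T.parent v)) f = none ∧
      ∃ fp : F, T.Fp (T.idx v) (T.state (T.parent v)) f = some fp ∧
        IsDepthNbr T (k + 1) fp (T.parent v) (T.parent w) ∧
        T.Om (T.idx v) (T.state (T.parent v)) (T.state (T.parent w)) f = some (T.idx w)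


private theorem nbr_aux {b : ℕ} {V S F : Type} (T : NeighborTree b V S F) :
    ∀ k f v w, IsDepthNbr T k f v w →
      (∀ w' k', IsDepthNbr T k' f v w' → w' = w ∧ k' = k) ∧
      T.lvl w = T.lvl v ∧ k ≤ T.lvl v := by
  intro k
  induction k using Nat.strong_induction_on with
  | _ k ih =>
    match k with
    | 0 => intro f v w h; exact h.elim
    | 1 =>
      intro f v w h
      obtain ⟨hv, hw, j, hj, hwj⟩ := h
      refine ⟨?_, ?_, ?_⟩
      · intro w' k' h'
        match k' with
        | 0 => exact h'.elim
        | 1 =>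
          obtain ⟨_, _, j', hj', hwj'⟩ := h'
          rw [hj] at hj'
          injection hj' with e; subst e
          exact ⟨by rw [hwj, hwj'], rfl⟩
        | k'' + 2 =>
          obtain ⟨_, _, hn', _⟩ := h'
          rw [hj] at hn'; exact absurd hn' (by simp)
      · rw [hwj, T.lvl_eq _ (T.child_ne_root _ _), T.parent_child, T.lvl_eq v hv]
      · rw [T.lvl_eq v hv]; omega
    | k + 2 =>
      intro f v w h
      obtain ⟨hv, hw, hn, fp, hfp, hrec, hom⟩ := h
      obtain ⟨huniq, hlvl, hle⟩ := ih (k + 1) (by omega) fp (T.parent v) (T.parent w) hrec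
      refine ⟨?_, ?_, ?_⟩
      · intro w' k' h'
        match k' with
        | 0 => exact h'.elim
        | 1 =>
          obtain ⟨_, _, j', hj', _⟩ := h'
          rw [hn] at hj'; exact absurd hj' (by simp)
        | k' + 2 =>
          obtain ⟨_, hw', _, fp', hfp', hrec', hom'⟩ := h'
          rw [hfp] at hfp'; injection hfp' with e; subst e
          obtain ⟨hpw, hk⟩ := huniq _ _ hrec'
          rw [hpw, hom] at hom'
          injection hom' with e2
          refine ⟨?_, by omega⟩
          rw [← T.child_parent_idx w' hw', ← T.child_parent_idx w hw, hpw, ← e2]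
      · rw [T.lvl_eq w hw, T.lvl_eq v hv, hlvl]
      · rw [T.lvl_eq v hv]; omega

theorem neighbor_unique_and_level {b : ℕ} (hb : 2 ≤ b) {V S F : Type}
    [Finite S] [Finite F] (T : NeighborTree b V S F)
    (v w : V) (f : F) (k : ℕ) (h : IsDepthNbr T k f v w) :
    -- `w` is the only `f`-neighbor of `v`
    (∀ (w' : V) (k' : ℕ), IsDepthNbr T k' f v w' → w' = w) ∧
    -- the depth `k` is unique
    (∀ k' : ℕ, (∃ w' : V, IsDepthNbr T k' f v w') → k' = k) ∧
    -- `ℓ(w) = ℓ(v)`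
    T.lvl w = T.lvl v ∧
    -- `k ≤ ℓ(v)`
    k ≤ T.lvl v := by
  obtain ⟨hu, hl, hk⟩ := nbr_aux T k f v w h
  exact ⟨fun w' k' h' => (hu w' k' h').1,
    fun k' ⟨w', h'⟩ => (hu w' k' h').2, hl, hk⟩
end

section
/- Let T be a neighbor-b-index-tree and define the function Neighbor : V × F → V ∪ {⊥} by recursion on ℓ(v) as follows: if ℓ(v) = 0, return ⊥; otherwise set j_w := N(I(v), S(P(v)), f); if j_w ≠ ⊥, return C(P(v), j_w); otherwise set f_p := F^p(I(v), S(P(v)), f); if f_p = ⊥, return ⊥; otherwise set p_w := Neighbor(P(v), f_p); if p_w = ⊥, return ⊥; otherwise set j̃ := Ω(I(v), S(P(v)), S(p_w), f); if j̃ = ⊥, return ⊥; otherwise return C(p_w, j̃). Then for all v ∈ V and f ∈ F: if v has an f-neighbor w, then Neighbor(v, f) = w; and if v has no f-neighbor, then Neighbor(v, f) = ⊥. -/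
/-- The neighbor-finding algorithm, defined by recursion on the level of `v`. -/
def neighborFn {b : ℕ} {V S F : Type} (T : NeighborTree b V S F)
    (v : V) (f : F) : Option V :=
  if h : T.lvl v = 0 then none
  else
    match T.N (T.idx v) (T.state (T.parent v)) f with
    | some jw => some (T.child (T.parent v) jw)
    | none =>
      match T.Fp (T.idx v) (T.state (T.parent v)) f with
      | none => none
      | some fp =>
        match neighborFn T (T.parent v) fp with
        | none => none
        | some pw =>
          match T.Om (T.idx v) (T.state (T.parent v)) (T.state pw) f with
          | none => none
          | some jt => some (T.child pw jt)
termination_by T.lvl v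
decreasing_by
  have hv : v ≠ T.root := fun hv => h (hv ▸ T.lvl_root)
  have := T.lvl_eq v hv
  omega

section Aux

variable {b : ℕ} {V S F : Type} (T : NeighborTree b V S F)

lemma idx_child (v : V) (j : Fin b) : T.idx (T.child v j) = j := by
  have h1 := T.child_parent_idx (T.child v j) (T.child_ne_root v j)
  rw [T.parent_child v j] at h1
  have := T.child_inj (a₁ := (v, T.idx (T.child v j))) (a₂ := (v, j)) h1
  exact (Prod.mk.injEq _ _ _ _ ▸ this).2

lemma neighborFn_zero {v : V} (f : F) (h : T.lvl v = 0) :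
    neighborFn T v f = none := by
  rw [neighborFn]; simp [h]

lemma neighborFn_someN {v : V} {f : F} {j : Fin b} (h : ¬ T.lvl v = 0)
    (hN : T.N (T.idx v) (T.state (T.parent v)) f = some j) :
    neighborFn T v f = some (T.child (T.parent v) j) := by
  rw [neighborFn]; simp [h, hN]

lemma neighborFn_noneFp {v : V} {f : F} (h : ¬ T.lvl v = 0)
    (hN : T.N (T.idx v) (T.state (T.parent v)) f = none)
    (hF : T.Fp (T.idx v) (T.state (T.parent v)) f = none) :
    neighborFn T v f = none := by
  rw [neighborFn]; simp [h, hN, hF]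

lemma neighborFn_recNone {v : V} {f fp : F} (h : ¬ T.lvl v = 0)
    (hN : T.N (T.idx v) (T.state (T.parent v)) f = none)
    (hF : T.Fp (T.idx v) (T.state (T.parent v)) f = some fp)
    (hrec : neighborFn T (T.parent v) fp = none) :
    neighborFn T v f = none := by
  rw [neighborFn]; simp [h, hN, hF, hrec]

lemma neighborFn_omNone {v pw : V} {f fp : F} (h : ¬ T.lvl v = 0)
    (hN : T.N (T.idx v) (T.state (T.parent v)) f = none)
    (hF : T.Fp (T.idx v) (T.state (T.parent v)) f = some fp)
    (hrec : neighborFn T (T.parent v) fp = some pw)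
    (hOm : T.Om (T.idx v) (T.state (T.parent v)) (T.state pw) f = none) :
    neighborFn T v f = none := by
  rw [neighborFn]; simp [h, hN, hF, hrec, hOm]

lemma neighborFn_omSome {v pw : V} {f fp : F} {jt : Fin b} (h : ¬ T.lvl v = 0)
    (hN : T.N (T.idx v) (T.state (T.parent v)) f = none)
    (hF : T.Fp (T.idx v) (T.state (T.parent v)) f = some fp)
    (hrec : neighborFn T (T.parent v) fp = some pw)
    (hOm : T.Om (T.idx v) (T.state (T.parent v)) (T.state pw) f = some jt) :
    neighborFn T v f = some (T.child pw jt) := by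
  rw [neighborFn]; simp [h, hN, hF, hrec, hOm]

end Aux

theorem neighborFn_correct {b : ℕ} (hb : 2 ≤ b) {V S F : Type}
    [Finite S] [Finite F] (T : NeighborTree b V S F) :
    ∀ (v : V) (f : F),
      (∀ w : V, (∃ k : ℕ, IsDepthNbr T k f v w) → neighborFn T v f = some w) ∧
      ((¬ ∃ w : V, ∃ k : ℕ, IsDepthNbr T k f v w) → neighborFn T v f = none) := by
  suffices h : ∀ n (v : V) (f : F), T.lvl v = n →
      (∀ w : V, (∃ k : ℕ, IsDepthNbr T k f v w) → neighborFn T v f = some w) ∧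
      ((¬ ∃ w : V, ∃ k : ℕ, IsDepthNbr T k f v w) → neighborFn T v f = none) by
    intro v f; exact h (T.lvl v) v f rfl
  intro n
  induction n using Nat.strong_induction_on with
  | _ n IH =>
  intro v f hlv
  by_cases hv0 : T.lvl v = 0
  · -- v is the root: no neighbors, neighborFn = none
    have hroot : v = T.root := by
      by_contra hv
      have := T.lvl_eq v hv; omega
    refine ⟨?_, fun _ => neighborFn_zero T f hv0⟩
    rintro w ⟨k, hk⟩
    exfalso
    match k, hk with
    | 1, hk => exact hk.1 hroot
    | (k + 2), hk => exact hk.1 hroot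
  · have hv : v ≠ T.root := fun h => hv0 (h ▸ T.lvl_root)
    have hp : T.lvl (T.parent v) < n := by
      have := T.lvl_eq v hv; omega
    rcases hN : T.N (T.idx v) (T.state (T.parent v)) f with _ | j
    · -- N = none
      rcases hF : T.Fp (T.idx v) (T.state (T.parent v)) f with _ | fp
      · -- Fp = none: no neighbors
        refine ⟨?_, fun _ => neighborFn_noneFp T hv0 hN hF⟩
        rintro w ⟨k, hk⟩
        exfalso
        match k, hk with
        | 1, hk =>
          obtain ⟨_, _, j, hj, _⟩ := hk
          rw [hN] at hj; exact nomatch hj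
        | (k + 2), hk =>
          obtain ⟨_, _, _, fp, hfp, _⟩ := hk
          rw [hF] at hfp; exact nomatch hfp
      · -- Fp = some fp: recurse
        obtain ⟨IH1, IH2⟩ := IH (T.lvl (T.parent v)) hp (T.parent v) fp rfl
        rcases hrec : neighborFn T (T.parent v) fp with _ | pw
        · -- recursion returned none: parent has no fp-neighbor
          have hnone : ¬ ∃ w : V, ∃ k : ℕ, IsDepthNbr T k fp (T.parent v) w := by
            rintro ⟨w', k', hw'⟩
            have := IH1 w' ⟨k', hw'⟩
            rw [hrec] at this; exact nomatch this
          refine ⟨?_, fun _ => neighborFn_recNone T hv0 hN hF hrec⟩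
          rintro w ⟨k, hk⟩
          exfalso
          match k, hk with
          | 1, hk =>
            obtain ⟨_, _, j, hj, _⟩ := hk
            rw [hN] at hj; exact nomatch hj
          | (k + 2), hk =>
            obtain ⟨_, _, _, fp', hfp', hdn, _⟩ := hk
            rw [hF] at hfp'
            obtain rfl : fp' = fp := (Option.some.injEq _ _ ▸ hfp'.symm)
            exact hnone ⟨T.parent w, k + 1, hdn⟩
        · -- recursion returned some pw
          have hpw : ∃ k' : ℕ, IsDepthNbr T k' fp (T.parent v) pw := by
            have hex : ∃ w' : V, ∃ k' : ℕ, IsDepthNbr T k' fp (T.parent v) w' := by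
              by_contra h
              rw [IH2 h] at hrec; exact nomatch hrec
            obtain ⟨w', k', hw'⟩ := hex
            have := IH1 w' ⟨k', hw'⟩
            rw [hrec] at this
            obtain rfl : pw = w' := Option.some.injEq _ _ ▸ this
            exact ⟨k', hw'⟩
          rcases hOm : T.Om (T.idx v) (T.state (T.parent v)) (T.state pw) f with _ | jt
          · -- Om = none: no neighbor
            refine ⟨?_, fun _ => neighborFn_omNone T hv0 hN hF hrec hOm⟩
            rintro w ⟨k, hk⟩
            exfalso
            match k, hk with
            | 1, hk =>
              obtain ⟨_, _, j, hj, _⟩ := hk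
              rw [hN] at hj; exact nomatch hj
            | (k + 2), hk =>
              obtain ⟨_, _, _, fp', hfp', hdn, hom⟩ := hk
              rw [hF] at hfp'
              obtain rfl : fp' = fp := (Option.some.injEq _ _ ▸ hfp'.symm)
              have := IH1 (T.parent w) ⟨k + 1, hdn⟩
              rw [hrec] at this
              obtain rfl : pw = T.parent w := Option.some.injEq _ _ ▸ this
              rw [hOm] at hom; exact nomatch hom
          · -- Om = some jt: neighbor is child pw jt
            have hval := neighborFn_omSome T hv0 hN hF hrec hOm
            constructor
            · rintro w ⟨k, hk⟩
              match k, hk with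
              | 1, hk =>
                obtain ⟨_, _, j, hj, _⟩ := hk
                rw [hN] at hj; exact nomatch hj
              | (k + 2), hk =>
                obtain ⟨_, hwroot, _, fp', hfp', hdn, hom⟩ := hk
                rw [hF] at hfp'
                obtain rfl : fp' = fp := (Option.some.injEq _ _ ▸ hfp'.symm)
                have := IH1 (T.parent w) ⟨k + 1, hdn⟩
                rw [hrec] at this
                obtain rfl : pw = T.parent w := Option.some.injEq _ _ ▸ this
                rw [hOm] at hom
                have hjt : jt = T.idx w := Option.some.injEq _ _ ▸ hom
                rw [hval, hjt, T.child_parent_idx w hwroot]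
            · intro hno
              exfalso
              apply hno
              obtain ⟨k', hpw'⟩ := hpw
              match k', hpw' with
              | (k'' + 1), hpw' =>
                refine ⟨T.child pw jt, k'' + 2, hv, T.child_ne_root pw jt, hN, fp, hF, ?_, ?_⟩
                · rw [T.parent_child pw jt]; exact hpw'
                · rw [T.parent_child pw jt, idx_child T pw jt]; exact hOm
    · -- N = some j: depth-1 neighbor
      have hval := neighborFn_someN T hv0 hN
      constructor
      · rintro w ⟨k, hk⟩
        match k, hk with
        | 1, hk =>
          obtain ⟨_, _, j', hj', hw⟩ := hk
          rw [hN] at hj'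
          obtain rfl : j = j' := Option.some.injEq _ _ ▸ hj'
          rw [hval, hw]
        | (k + 2), hk =>
          obtain ⟨_, _, hn, _⟩ := hk
          rw [hN] at hn; exact nomatch hn
      · intro hno
        exfalso
        exact hno ⟨T.child (T.parent v) j, 1, hv, T.child_ne_root _ _, j, hN, rfl⟩
end

section
/- Let a b-specification be given and let u : S → B* be a pre-representation, i.e. σ(u(s)) = s for all s ∈ S and u(s_r) = ε (the empty word). Then the induced geometric tree is pre-regular if and only if u is pre-regular, i.e.: (P1') for all s ∈ S and j ∈ B, Q(u(s)·j) ∼ Q(u(σ(u(s)·j))), and (P2') for all s ∈ S, dim(conv(Q(u(s)))) = d. -/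
open Matrix BigOperators

/-- A `b`-specification in dimension `d`: states `S` with root state `sr` and
child-state map `Sc` (every state reachable from `sr`), vertex counts `n s ≥ 1`,
a root point matrix `Qr`, and transition matrices `M s j` (all column sums 1). -/
structure BSpec (d b : ℕ) (S : Type) where
  sr : S
  Sc : S → Fin b → S
  reach : ∀ s : S, ∃ w : List (Fin b), w.foldl Sc sr = s
  n : S → ℕ
  n_pos : ∀ s : S, 1 ≤ n s
  Qr : Matrix (Fin d) (Fin (n sr)) ℝ
  M : (s : S) → (j : Fin b) → Matrix (Fin (n s)) (Fin (n (Sc s j))) ℝ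
  M_trans : ∀ (s : S) (j : Fin b) (col : Fin (n (Sc s j))), ∑ i, M s j i col = 1

namespace BSpec

variable {d b : ℕ} {S : Type}

/-- The state `σ(w)` of the tree node given by the word `w` (digits read left to right,
`σ(ε) = s_r`, `σ(w·j) = S^c(σ(w), j)`). -/
def st (sp : BSpec d b S) (w : List (Fin b)) : S :=
  w.foldl sp.Sc sp.sr

/-- Helper for the point matrices: fold the transition matrices along a word. -/
def Qfrom (sp : BSpec d b S) :
    (s : S) → (w : List (Fin b)) → Matrix (Fin d) (Fin (sp.n s)) ℝ →
      Matrix (Fin d) (Fin (sp.n (w.foldl sp.Sc s))) ℝ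
  | _, [], Q => Q
  | s, j :: w, Q => sp.Qfrom (sp.Sc s j) w (Q * sp.M s j)

/-- The point matrix `Q(w)` of the tree node given by the word `w`
(`Q(ε) = Q^r`, `Q(w·j) = Q(w)·M^{σ(w),j}`). -/
def Qm (sp : BSpec d b S) (w : List (Fin b)) :
    Matrix (Fin d) (Fin (sp.n (sp.st w))) ℝ :=
  sp.Qfrom sp.sr w sp.Qr

end BSpec

/-- The `i`-th column of a matrix, as a point of `ℝ^d`. -/
def colFun {d m : ℕ} (Q : Matrix (Fin d) (Fin m) ℝ) (i : Fin m) : Fin d → ℝ :=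
  fun r => Q r i

/-- The convex hull of the columns of `Q`. -/
def convOf {d m : ℕ} (Q : Matrix (Fin d) (Fin m) ℝ) : Set (Fin d → ℝ) :=
  convexHull ℝ (Set.range (colFun Q))

/-- The family of index sets (as subsets of `ℕ`) of facets of `conv(Q)`. -/
def idxFacets {d m : ℕ} (Q : Matrix (Fin d) (Fin m) ℝ) : Set (Set ℕ) :=
  {I | ∃ F : Set (Fin d → ℝ), IsFacet (convOf Q) F ∧
    I = {i : ℕ | ∃ h : i < m, colFun Q ⟨i, h⟩ ∈ F}}

/-- The convex hull of the columns of `Q` whose index lies in `I`. -/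
def facetOfIdx {d m : ℕ} (Q : Matrix (Fin d) (Fin m) ℝ) (I : Set ℕ) :
    Set (Fin d → ℝ) :=
  convexHull ℝ {x | ∃ i : Fin m, (i : ℕ) ∈ I ∧ x = colFun Q i}

/-- `τ : Q ∼ Q'`: the matrices have the same number of columns and the invertible
affine map `τ` carries the `i`-th column of `Q` to the `i`-th column of `Q'`. -/
def SimBy {d m m' : ℕ} (τ : (Fin d → ℝ) ≃ᵃ[ℝ] (Fin d → ℝ))
    (Q : Matrix (Fin d) (Fin m) ℝ) (Q' : Matrix (Fin d) (Fin m') ℝ) : Prop :=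
  m = m' ∧ ∀ (i : ℕ) (h : i < m) (h' : i < m'),
    colFun Q' ⟨i, h'⟩ = τ (colFun Q ⟨i, h⟩)

/-- `Q ∼ Q'`: some invertible affine map carries the columns of `Q` to those of `Q'`. -/
def Sim {d m m' : ℕ} (Q : Matrix (Fin d) (Fin m) ℝ)
    (Q' : Matrix (Fin d) (Fin m') ℝ) : Prop :=
  ∃ τ : (Fin d → ℝ) ≃ᵃ[ℝ] (Fin d → ℝ), SimBy τ Q Q'

namespace BSpec

variable {d b : ℕ} {S : Type}

/-- `v'` is a geometric neighbor of `v` at the facet index set `I`: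
`v` and `v'` are words of equal positive length, `I ∈ indexFacets(Q(v))`,
`conv(Q(v)) ∩ conv(Q(v'))` equals the facet of `conv(Q(v))` spanned by the
columns indexed by `I`, and this intersection is also a facet of `conv(Q(v'))`. -/
def GeomNbr (sp : BSpec d b S) (v v' : List (Fin b)) (I : Set ℕ) : Prop :=
  v.length = v'.length ∧ v ≠ [] ∧
  I ∈ idxFacets (sp.Qm v) ∧
  convOf (sp.Qm v) ∩ convOf (sp.Qm v') = facetOfIdx (sp.Qm v) I ∧
  IsFacet (convOf (sp.Qm v')) (convOf (sp.Qm v) ∩ convOf (sp.Qm v'))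

/-- Pre-regularity: (P1) equal states give affinely equivalent point matrices;
(P2) every node polytope is full-dimensional. -/
def PreRegular (sp : BSpec d b S) : Prop :=
  (∀ w w' : List (Fin b), sp.st w = sp.st w' → Sim (sp.Qm w) (sp.Qm w')) ∧
  (∀ w : List (Fin b), setDim (convOf (sp.Qm w)) = (d : ℤ))

/-- Regularity: pre-regularity together with (R1), (R2) and (R3). -/
def Regular (sp : BSpec d b S) : Prop :=
  sp.PreRegular ∧
  -- (R1)
  (∀ (v₁ v₂ v₁' v₂' : List (Fin b)) (I : Set ℕ),
    sp.GeomNbr v₁ v₂ I → sp.GeomNbr v₁' v₂' I →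
    sp.st v₁ = sp.st v₁' → sp.st v₂ = sp.st v₂' →
    ∃ τ : (Fin d → ℝ) ≃ᵃ[ℝ] (Fin d → ℝ),
      SimBy τ (sp.Qm v₁) (sp.Qm v₁') ∧ SimBy τ (sp.Qm v₂) (sp.Qm v₂')) ∧
  -- (R2)
  (∀ (w : List (Fin b)) (j : Fin b),
    convOf (sp.Qm (w ++ [j])) ⊆ convOf (sp.Qm w)) ∧
  -- (R3)
  (∀ v v' : List (Fin b), v.length = v'.length →
    (setDim (convOf (sp.Qm v) ∩ convOf (sp.Qm v')) = (d : ℤ) → v = v') ∧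
    (setDim (convOf (sp.Qm v) ∩ convOf (sp.Qm v')) = (d : ℤ) - 1 →
      ∃ I ∈ idxFacets (sp.Qm v), sp.GeomNbr v v' I))

end BSpec


-- ===== auxiliary lemmas =====

lemma sim_refl {d m : ℕ} (Q : Matrix (Fin d) (Fin m) ℝ) : Sim Q Q :=
  ⟨AffineEquiv.refl ℝ _, rfl, fun _ _ _ => rfl⟩

lemma sim_symm {d m m' : ℕ} {Q : Matrix (Fin d) (Fin m) ℝ}
    {Q' : Matrix (Fin d) (Fin m') ℝ} (h : Sim Q Q') : Sim Q' Q := by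
  obtain ⟨τ, hm, hc⟩ := h
  exact ⟨τ.symm, hm.symm, fun i h h' => by rw [hc i h' h]; simp⟩

lemma sim_trans {d m m' m'' : ℕ} {Q : Matrix (Fin d) (Fin m) ℝ}
    {Q' : Matrix (Fin d) (Fin m') ℝ} {Q'' : Matrix (Fin d) (Fin m'') ℝ}
    (h : Sim Q Q') (h' : Sim Q' Q'') : Sim Q Q'' := by
  obtain ⟨τ, hm, hc⟩ := h
  obtain ⟨τ', hm', hc'⟩ := h'
  refine ⟨τ.trans τ', hm.trans hm', fun i hi hi' => ?_⟩
  rw [hc' i (hm ▸ hi) hi', hc i hi (hm ▸ hi)]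
  simp

lemma sim_congr {d m₁ m₂ k₁ k₂ : ℕ} {A : Matrix (Fin d) (Fin m₁) ℝ}
    {B : Matrix (Fin d) (Fin m₂) ℝ} {C : Matrix (Fin d) (Fin k₁) ℝ}
    {D : Matrix (Fin d) (Fin k₂) ℝ} (hm : m₁ = m₂) (hk : k₁ = k₂)
    (hAB : HEq A B) (hCD : HEq C D) (h : Sim A C) : Sim B D := by
  subst hm; subst hk
  cases eq_of_heq hAB
  cases eq_of_heq hCD
  exact h

lemma simBy_mul {d m k : ℕ} (τ : (Fin d → ℝ) ≃ᵃ[ℝ] (Fin d → ℝ))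
    {A B : Matrix (Fin d) (Fin m) ℝ}
    (h : SimBy τ A B) {M : Matrix (Fin m) (Fin k) ℝ} (hsum : ∀ c, ∑ i, M i c = 1) :
    SimBy τ (A * M) (B * M) := by
  refine ⟨rfl, fun c hc hc' => ?_⟩
  have key : ∀ (C : Matrix (Fin d) (Fin m) ℝ),
      colFun (C * M) ⟨c, hc⟩ =
        Finset.univ.affineCombination ℝ (colFun C) (fun i => M i ⟨c, hc⟩) := by
    intro C
    rw [Finset.affineCombination_eq_linear_combination _ _ _ (hsum ⟨c, hc⟩)]
    funext r
    simp [colFun, Matrix.mul_apply, Finset.sum_apply, mul_comm]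
  rw [key A, key B, ← AffineEquiv.coe_toAffineMap,
    Finset.map_affineCombination _ _ _ (hsum ⟨c, hc⟩) τ.toAffineMap]
  have hp : colFun B = (⇑τ.toAffineMap ∘ colFun A) := by
    funext i
    simpa using h.2 i i.isLt i.isLt
  rw [hp]

lemma sim_mul_heq {d m₁ m₂ k₁ k₂ : ℕ} {A : Matrix (Fin d) (Fin m₁) ℝ}
    {B : Matrix (Fin d) (Fin m₂) ℝ} {M₁ : Matrix (Fin m₁) (Fin k₁) ℝ}
    {M₂ : Matrix (Fin m₂) (Fin k₂) ℝ}
    (hm : m₁ = m₂) (hk : k₁ = k₂) (hM : HEq M₁ M₂)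
    (hsum : ∀ c, ∑ i, M₁ i c = 1) (h : Sim A B) : Sim (A * M₁) (B * M₂) := by
  subst hm; subst hk
  cases eq_of_heq hM
  obtain ⟨τ, hτ⟩ := h
  exact ⟨τ, simBy_mul τ hτ hsum⟩

lemma convOf_simBy {d m m' : ℕ} {τ : (Fin d → ℝ) ≃ᵃ[ℝ] (Fin d → ℝ)}
    {Q : Matrix (Fin d) (Fin m) ℝ} {Q' : Matrix (Fin d) (Fin m') ℝ}
    (h : SimBy τ Q Q') : convOf Q' = ⇑τ '' convOf Q := by
  obtain ⟨hm, hc⟩ := h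
  subst hm
  have hr : Set.range (colFun Q') = ⇑τ '' Set.range (colFun Q) := by
    rw [← Set.range_comp]
    have : colFun Q' = ⇑τ ∘ colFun Q := by
      funext i
      simpa using hc i i.isLt i.isLt
    rw [this]
  rw [convOf, hr, ← AffineEquiv.coe_toAffineMap, ← AffineMap.image_convexHull]
  rfl

lemma setDim_image {d : ℕ} (τ : (Fin d → ℝ) ≃ᵃ[ℝ] (Fin d → ℝ))
    (s : Set (Fin d → ℝ)) : setDim (⇑τ '' s) = setDim s := by
  unfold setDim
  by_cases hs : s = ∅
  · simp [hs]
  · rw [if_neg hs, if_neg (by simp [Set.image_eq_empty, hs])]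
    rw [← AffineEquiv.coe_toAffineMap, ← AffineSubspace.map_span τ.toAffineMap s]
    rw [AffineSubspace.map_direction]
    have : τ.toAffineMap.linear = (τ.linear : (Fin d → ℝ) →ₗ[ℝ] (Fin d → ℝ)) := rfl
    rw [this, LinearEquiv.finrank_map_eq]

lemma setDim_convOf_sim {d m m' : ℕ} {Q : Matrix (Fin d) (Fin m) ℝ}
    {Q' : Matrix (Fin d) (Fin m') ℝ} (h : Sim Q Q') :
    setDim (convOf Q) = setDim (convOf Q') := by
  obtain ⟨τ, hτ⟩ := h
  rw [convOf_simBy hτ, setDim_image]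

namespace BSpec

variable {d b : ℕ} {S : Type}

lemma heq_M (sp : BSpec d b S) {s t : S} (h : s = t) (j : Fin b) :
    HEq (sp.M s j) (sp.M t j) := by subst h; rfl

lemma heq_Qm (sp : BSpec d b S) {v w : List (Fin b)} (h : v = w) :
    HEq (sp.Qm v) (sp.Qm w) := by subst h; rfl

lemma Qfrom_append (sp : BSpec d b S) :
    ∀ (w : List (Fin b)) (s : S) (Q : Matrix (Fin d) (Fin (sp.n s)) ℝ)
      (v : List (Fin b)),
      HEq (sp.Qfrom s (w ++ v) Q) (sp.Qfrom (w.foldl sp.Sc s) v (sp.Qfrom s w Q))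
  | [], _, _, _ => HEq.rfl
  | j :: w, s, Q, v => sp.Qfrom_append w (sp.Sc s j) (Q * sp.M s j) v

lemma st_append_singleton (sp : BSpec d b S) (w : List (Fin b)) (j : Fin b) :
    sp.st (w ++ [j]) = sp.Sc (sp.st w) j := by
  simp [BSpec.st, List.foldl_append]

lemma heq_Qm_append_singleton (sp : BSpec d b S) (w : List (Fin b)) (j : Fin b) :
    HEq (sp.Qm (w ++ [j])) (sp.Qm w * sp.M (sp.st w) j) :=
  sp.Qfrom_append w sp.sr sp.Qr [j]

end BSpec

theorem preRegular_iff_preRepresentation {d b : ℕ} (hd : 2 ≤ d) (hb : 2 ≤ b)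
    {S : Type} [Finite S] (sp : BSpec d b S)
    (u : S → List (Fin b))
    (hu_state : ∀ s : S, sp.st (u s) = s)
    (hu_root : u sp.sr = []) :
    sp.PreRegular ↔
      -- (P1') children of representants are equivalent to the representant
      -- of their state
      ((∀ (s : S) (j : Fin b),
          Sim (sp.Qm (u s ++ [j])) (sp.Qm (u (sp.st (u s ++ [j]))))) ∧
      -- (P2') representant polytopes are full-dimensional
       (∀ s : S, setDim (convOf (sp.Qm (u s))) = (d : ℤ))) := by 
  constructor
  · rintro ⟨h1, h2⟩
    exact ⟨fun s j => h1 _ _ (hu_state _).symm, fun s => h2 _⟩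
  · rintro ⟨h1, h2⟩
    have key : ∀ w : List (Fin b), Sim (sp.Qm w) (sp.Qm (u (sp.st w))) := by
      intro w
      induction w using List.reverseRecOn with
      | nil =>
        have cw : sp.n (sp.st ([] : List (Fin b))) =
            sp.n (sp.st (u (sp.st ([] : List (Fin b))))) :=
          (congrArg sp.n (hu_state _)).symm
        exact sim_congr rfl cw HEq.rfl (sp.heq_Qm hu_root.symm)
          (sim_refl (sp.Qm []))
      | append_singleton w j ih =>
        have hst : sp.st (w ++ [j]) = sp.Sc (sp.st w) j := sp.st_append_singleton w j
        have hs : sp.st (u (sp.st w)) = sp.st w := hu_state _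
        have hst2 : sp.st (u (sp.st w) ++ [j]) = sp.st (w ++ [j]) := by
          rw [sp.st_append_singleton, hs, hst]
        -- counting equalities
        have c1 : sp.n (sp.Sc (sp.st w) j) = sp.n (sp.st (w ++ [j])) := by rw [hst]
        have c2 : sp.n (sp.Sc (sp.st (u (sp.st w))) j) = sp.n (sp.st (u (sp.st w) ++ [j])) := by
          rw [sp.st_append_singleton]
        have hmw : sp.n (sp.st w) = sp.n (sp.st (u (sp.st w))) := by rw [hs]
        have hk : sp.n (sp.Sc (sp.st w) j) = sp.n (sp.Sc (sp.st (u (sp.st w))) j) := by rw [hs]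
        have hMheq : HEq (sp.M (sp.st w) j) (sp.M (sp.st (u (sp.st w))) j) :=
          sp.heq_M hs.symm j
        have step1 : Sim (sp.Qm w * sp.M (sp.st w) j)
            (sp.Qm (u (sp.st w)) * sp.M (sp.st (u (sp.st w))) j) :=
          sim_mul_heq hmw hk hMheq (fun c => sp.M_trans _ j c) ih
        have t1 : Sim (sp.Qm (w ++ [j])) (sp.Qm (u (sp.st w) ++ [j])) :=
          sim_congr c1 c2 (sp.heq_Qm_append_singleton w j).symm
            (sp.heq_Qm_append_singleton (u (sp.st w)) j).symm step1
        have t2 : Sim (sp.Qm (u (sp.st w) ++ [j]))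
            (sp.Qm (u (sp.st (u (sp.st w) ++ [j])))) := h1 (sp.st w) j
        have hword : u (sp.st (u (sp.st w) ++ [j])) = u (sp.st (w ++ [j])) :=
          congrArg u hst2
        have cw : sp.n (sp.st (u (sp.st (u (sp.st w) ++ [j])))) =
            sp.n (sp.st (u (sp.st (w ++ [j])))) := by rw [hword]
        have t2' : Sim (sp.Qm (u (sp.st w) ++ [j])) (sp.Qm (u (sp.st (w ++ [j])))) :=
          sim_congr rfl cw HEq.rfl (sp.heq_Qm hword) t2
        exact sim_trans t1 t2'
    constructor
    · intro w w' hww'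
      have k2 : Sim (sp.Qm w') (sp.Qm (u (sp.st w))) := by
        have cw : sp.n (sp.st (u (sp.st w'))) = sp.n (sp.st (u (sp.st w))) := by rw [hww']
        exact sim_congr rfl cw HEq.rfl (sp.heq_Qm (congrArg u hww'.symm)) (key w')
      exact sim_trans (key w) (sim_symm k2)
    · intro w
      rw [setDim_convOf_sim (key w)]
      exact h2 _
end
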